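/- Let H, H_1, …, H_p be finite-dimensional real inner product spaces with Σ_{α=1}^p R_α* R_α = I, and A : H → H self-adjoint positive semidefinite. Define on 𝐇 = ⊕_α H_α the full block operator 𝐀 with blocks R_α A R_β* and the block-diagonal operator 𝐀_0 with blocks R_α A R_α* (zero off-diagonal). Then 𝐀_0 ≥ (1/p) 𝐀, i.e., ⟨𝐀_0 𝐯, 𝐯⟩ ≥ (1/p)⟨𝐀 𝐯, 𝐯⟩ for all 𝐯 ∈ 𝐇. -/

import Mathlib

open scoped RealInnerProductSpace

/-- 𝐀₀ ≥ (1/p) 𝐀 for the block-diagonal part of the block operator. -/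
theorem stmt6 {H : Type*} [NormedAddCommGroup H] [InnerProductSpace ℝ H]
    [FiniteDimensional ℝ H]
    {p : ℕ} (hp : 0 < p) {Hs : Fin p → Type*}
    [∀ α, NormedAddCommGroup (Hs α)] [∀ α, InnerProductSpace ℝ (Hs α)]
    [∀ α, FiniteDimensional ℝ (Hs α)]
    (R : ∀ α, H →ₗ[ℝ] Hs α)
    (hR : ∑ α, (LinearMap.adjoint (R α)) ∘ₗ (R α) = LinearMap.id)
    (A : H →ₗ[ℝ] H) (hA : LinearMap.IsSymmetric A) (hApos : ∀ u : H, 0 ≤ ⟪A u, u⟫) :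
    ∀ v : ∀ α, Hs α,
      (1 / (p : ℝ)) * ∑ α, ⟪∑ β, R α (A ((LinearMap.adjoint (R β)) (v β))), v α⟫
        ≤ ∑ α, ⟪R α (A ((LinearMap.adjoint (R α)) (v α))), v α⟫ := by
  intro v
  set x : Fin p → H := fun α => (LinearMap.adjoint (R α)) (v α) with hx
  have key : ∀ a b : H, ⟪A a, b⟫ ≤ (⟪A a, a⟫ + ⟪A b, b⟫) / 2 := by
    intro a b
    have h0 := hApos (a - b)
    have hsym : ⟪A a, b⟫ = ⟪A b, a⟫ := by rw [hA a b, real_inner_comm]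
    have hexp : ⟪A (a - b), a - b⟫ = ⟪A a, a⟫ - 2 * ⟪A a, b⟫ + ⟪A b, b⟫ := by
      simp [map_sub, inner_sub_left, inner_sub_right, hsym]; ring
    rw [hexp] at h0
    linarith
  have h1 : ∀ α, ⟪∑ β, R α (A (x β)), v α⟫ = ∑ β, ⟪A (x β), x α⟫ := by
    intro α
    rw [sum_inner]
    refine Finset.sum_congr rfl fun β _ => ?_
    rw [← LinearMap.adjoint_inner_right]
  have h2 : ∀ α, ⟪R α (A (x α)), v α⟫ = ⟪A (x α), x α⟫ := by
    intro α; rw [← LinearMap.adjoint_inner_right]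
  show (1 / (p : ℝ)) * ∑ α, ⟪∑ β, R α (A (x β)), v α⟫ ≤ ∑ α, ⟪R α (A (x α)), v α⟫
  simp only [h1, h2]
  have hp' : (0 : ℝ) < (p : ℝ) := by exact_mod_cast hp
  rw [one_div, inv_mul_le_iff₀ hp']
  calc ∑ α, ∑ β, ⟪A (x β), x α⟫
      ≤ ∑ α, ∑ β, (⟪A (x β), x β⟫ + ⟪A (x α), x α⟫) / 2 := by
        refine Finset.sum_le_sum fun α _ => Finset.sum_le_sum fun β _ => key _ _
    _ = (p : ℝ) * ∑ α, ⟪A (x α), x α⟫ := by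
        simp [Finset.sum_add_distrib, Finset.sum_div, Finset.sum_const, Finset.card_univ,
          ← Finset.sum_div]
        rw [← Finset.mul_sum]; ring
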